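/- Let s_j(δ) = Σ_i w_i · exp(δ_j + μ_{ij}) / (1 + Σ_{k∈J} exp(δ_k + μ_{ik})) be the logit market share of product j, s_0(δ) = 1 − Σ_{k∈J} s_k(δ), and let S_j > 0 for j ∈ J and S_0 > 0 be observed shares with S_0 + Σ_{j∈J} S_j = 1. Fix γ ≥ 0. If δ satisfies δ_j = δ_j + (log S_j − log s_j(δ)) − γ(log S_0 − log s_0(δ)) for all j ∈ J, then s_j(δ) = S_j for all j ∈ J. -/

import Mathlib

open Real Finset

theorem stmt0 {I J : Type*} [Fintype I] [Fintype J] [Nonempty I] [Nonempty J]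
    (w : I → ℝ) (μ : I → J → ℝ) (S : J → ℝ) (S0 : ℝ) (γ : ℝ) (δ : J → ℝ)
    (hw : ∀ i, 0 < w i) (hwsum : ∑ i, w i = 1)
    (hS : ∀ j, 0 < S j) (hS0 : 0 < S0) (hsum : S0 + ∑ j, S j = 1)
    (hγ : 0 ≤ γ)
    (s : (J → ℝ) → J → ℝ)
    (hs : ∀ d j, s d j =
      ∑ i, w i * Real.exp (d j + μ i j) / (1 + ∑ k, Real.exp (d k + μ i k)))
    (s0 : (J → ℝ) → ℝ)
    (hs0 : ∀ d, s0 d = 1 - ∑ k, s d k)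
    (hfix : ∀ j, δ j = δ j + (Real.log (S j) - Real.log (s δ j))
        - γ * (Real.log S0 - Real.log (s0 δ))) :
    ∀ j, s δ j = S j := by
  -- positivity of denominators
  have hden : ∀ i : I, 0 < 1 + ∑ k, Real.exp (δ k + μ i k) := by
    intro i
    have : 0 ≤ ∑ k, Real.exp (δ k + μ i k) :=
      Finset.sum_nonneg fun k _ => (Real.exp_pos _).le
    linarith
  -- each s δ j is positive
  have hspos : ∀ j, 0 < s δ j := by
    intro j
    rw [hs]
    apply Finset.sum_pos
    · intro i _
      exact div_pos (mul_pos (hw i) (Real.exp_pos _)) (hden i)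
    · exact Finset.univ_nonempty
  have hApos : 0 < ∑ j, s δ j :=
    Finset.sum_pos (fun j _ => hspos j) Finset.univ_nonempty
  -- s0 δ is positive
  have hAsum : ∑ j, s δ j = ∑ i, w i * (∑ k, Real.exp (δ k + μ i k)) /
      (1 + ∑ k, Real.exp (δ k + μ i k)) := by
    simp only [hs]
    rw [Finset.sum_comm]
    apply Finset.sum_congr rfl
    intro i _
    rw [← Finset.sum_div, ← Finset.mul_sum]
  have hs0pos : 0 < s0 δ := by
    rw [hs0, hAsum]
    have : 1 - ∑ i, w i * (∑ k, Real.exp (δ k + μ i k)) /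
        (1 + ∑ k, Real.exp (δ k + μ i k)) =
        ∑ i, w i * (1 / (1 + ∑ k, Real.exp (δ k + μ i k))) := by
      rw [← hwsum, ← Finset.sum_sub_distrib]
      apply Finset.sum_congr rfl
      intro i _
      have h := (hden i).ne'
      rw [hwsum, mul_div_assoc, ← mul_one_sub, one_sub_div h, add_sub_cancel_right]
    rw [this]
    apply Finset.sum_pos
    · intro i _
      exact mul_pos (hw i) (div_pos one_pos (hden i))
    · exact Finset.univ_nonempty
  set t : ℝ := Real.log S0 - Real.log (s0 δ) with ht
  -- from the fixed point: log S j = log (s δ j) + γ * t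
  have hlog : ∀ j, Real.log (S j) = Real.log (s δ j) + γ * t := by
    intro j
    have := hfix j
    linarith
  have hSj : ∀ j, S j = s δ j * Real.exp (γ * t) := by
    intro j
    have h1 : S j = Real.exp (Real.log (s δ j) + γ * t) := by
      rw [← hlog j, Real.exp_log (hS j)]
    rw [h1, Real.exp_add, Real.exp_log (hspos j)]
  have hS0' : S0 = s0 δ * Real.exp t := by
    have h1 : S0 = Real.exp (Real.log (s0 δ) + t) := by
      rw [ht]
      have : Real.log (s0 δ) + (Real.log S0 - Real.log (s0 δ)) = Real.log S0 := by ring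
      rw [this, Real.exp_log hS0]
    rw [h1, Real.exp_add, Real.exp_log hs0pos]
  have hSsum : ∑ j, S j = (∑ j, s δ j) * Real.exp (γ * t) := by
    rw [Finset.sum_mul]
    exact Finset.sum_congr rfl fun j _ => hSj j
  have hone : s0 δ + ∑ j, s δ j = 1 := by
    rw [hs0]; ring
  have key : s0 δ * Real.exp t + (∑ j, s δ j) * Real.exp (γ * t) = 1 := by
    rw [← hS0', ← hSsum, hsum]
  have ht0 : t = 0 := by
    rcases lt_trichotomy t 0 with h | h | h
    · exfalso
      have h1 : Real.exp t < 1 := Real.exp_lt_one_iff.mpr h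
      have h2 : Real.exp (γ * t) ≤ 1 := by
        apply Real.exp_le_one_iff.mpr
        exact mul_nonpos_of_nonneg_of_nonpos hγ h.le
      nlinarith
    · exact h
    · exfalso
      have h1 : 1 < Real.exp t := Real.one_lt_exp_iff.mpr h
      have h2 : 1 ≤ Real.exp (γ * t) := by
        apply Real.one_le_exp_iff.mpr
        positivity
      nlinarith
  intro j
  rw [hSj j, ht0, mul_zero, Real.exp_zero, mul_one]
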